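/- Fix n ≥ 2, N ≥ 1, and 1 ≤ θ ≤ n−1. Then any partition of the product space ({0,1}^N)^n into Π_{{θ}}^N-monochromatic boxes has at least (C(n,θ−1) + C(n,θ) + C(n,θ+1))^N = (C(n+1,θ) + C(n,θ+1))^N parts. -/

import Mathlib

/-- The Hamming weight of the `j`-th column of an `n × N` Boolean measurement matrix. -/
def colWeight {n N : ℕ} (M : Fin n → Fin N → Bool) (j : Fin N) : ℕ :=
  (Finset.univ.filter fun i => M i j = true).card

/-- The block delta function `Π_{{θ}}^N`: its `j`-th coordinate is `1` iff the `j`-th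
column of `M` has exactly `θ` ones. -/
def blockDelta {n N : ℕ} (θ : ℕ) (M : Fin n → Fin N → Bool) : Fin N → Bool :=
  fun j => decide (colWeight M j = θ)

/-- Any partition of `({0,1}^N)^n` into `Π_{{θ}}^N`-monochromatic boxes has
at least `(C(n,θ−1) + C(n,θ) + C(n,θ+1))^N = (C(n+1,θ) + C(n,θ+1))^N` parts. -/
theorem delta_partition_lower_bound (n N θ : ℕ)
    (hn : 2 ≤ n) (hN : 1 ≤ N) (hθ1 : 1 ≤ θ) (hθn : θ ≤ n - 1)
    {ι : Type*} [Fintype ι]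
    (A : ι → Fin n → Set (Fin N → Bool))
    (hdisj : ∀ i j, i ≠ j →
      Disjoint {M : Fin n → Fin N → Bool | ∀ r, M r ∈ A i r}
               {M : Fin n → Fin N → Bool | ∀ r, M r ∈ A j r})
    (hcover : ⋃ i, {M : Fin n → Fin N → Bool | ∀ r, M r ∈ A i r} = Set.univ)
    (hmono : ∀ i, ∀ M ∈ {M : Fin n → Fin N → Bool | ∀ r, M r ∈ A i r},
                  ∀ M' ∈ {M : Fin n → Fin N → Bool | ∀ r, M r ∈ A i r},
      blockDelta θ M = blockDelta θ M') :
    (n.choose (θ - 1) + n.choose θ + n.choose (θ + 1)) ^ N ≤ Fintype.card ι ∧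
    (n.choose (θ - 1) + n.choose θ + n.choose (θ + 1)) ^ N
      = ((n + 1).choose θ + n.choose (θ + 1)) ^ N := by
  classical
  have hid : n.choose (θ - 1) + n.choose θ + n.choose (θ + 1)
      = (n + 1).choose θ + n.choose (θ + 1) := by
    obtain ⟨k, rfl⟩ : ∃ k, θ = k + 1 := ⟨θ - 1, by omega⟩
    have : (n + 1).choose (k + 1) = n.choose k + n.choose (k + 1) :=
      Nat.choose_succ_succ n k
    simp only [Nat.add_sub_cancel, this]
  refine ⟨?_, by rw [hid]⟩
  -- the fooling set argument
  have hex : ∀ M : Fin n → Fin N → Bool, ∃ i, ∀ r, M r ∈ A i r := by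
    intro M
    have : M ∈ ⋃ i, {M : Fin n → Fin N → Bool | ∀ r, M r ∈ A i r} := by
      rw [hcover]; trivial
    simpa using Set.mem_iUnion.mp this
  -- matrices from column-set functions
  set mat : (Fin N → Finset (Fin n)) → (Fin n → Fin N → Bool) :=
    fun f i j => decide (i ∈ f j) with hmat
  have hw : ∀ f j, colWeight (mat f) j = (f j).card := by
    intro f j
    unfold colWeight
    congr 1
    ext i
    simp [hmat]
  set φ : (Fin N → Finset (Fin n)) → ι := fun f => Classical.choose (hex (mat f)) with hφ
  have hφspec : ∀ f, ∀ r, mat f r ∈ A (φ f) r := fun f => Classical.choose_spec (hex (mat f))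
  set K : Finset (Finset (Fin n)) :=
    Finset.univ.filter (fun s => s.card = θ - 1 ∨ s.card = θ ∨ s.card = θ + 1) with hKdef
  set F : Finset (Fin N → Finset (Fin n)) := Fintype.piFinset (fun _ => K) with hFdef
  have hKcard : K.card = n.choose (θ - 1) + n.choose θ + n.choose (θ + 1) := by
    have hc : ∀ k : ℕ, (Finset.univ.filter fun s : Finset (Fin n) => s.card = k).card
        = n.choose k := by
      intro k
      have : (Finset.univ.filter fun s : Finset (Fin n) => s.card = k)
          = (Finset.univ : Finset (Fin n)).powersetCard k := by
        rw [Finset.powersetCard_eq_filter, Finset.powerset_univ]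
      rw [this, Finset.card_powersetCard, Finset.card_univ, Fintype.card_fin]
    rw [hKdef, Finset.filter_or, Finset.filter_or]
    rw [Finset.card_union_of_disjoint, Finset.card_union_of_disjoint, hc, hc, hc]
    · omega
    · rw [Finset.disjoint_left]
      intro s hs hs'
      simp only [Finset.mem_filter] at hs hs'
      omega
    · rw [Finset.disjoint_left]
      intro s hs hs'
      simp only [Finset.mem_filter, Finset.mem_union] at hs hs'
      omega
  have hFcard : F.card = (n.choose (θ - 1) + n.choose θ + n.choose (θ + 1)) ^ N := by
    rw [hFdef, Fintype.card_piFinset]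
    simp [hKcard]
  rw [← hFcard, ← Finset.card_univ (α := ι)]
  apply Finset.card_le_card_of_injOn φ (fun _ _ => Finset.mem_univ _)
  -- injectivity on F
  intro f hf g hg hfg
  by_contra hne
  obtain ⟨j, hj⟩ : ∃ j, f j ≠ g j := Function.ne_iff.mp hne
  set i := φ f with hi
  have hMf : ∀ r, mat f r ∈ A i r := hφspec f
  have hMg : ∀ r, mat g r ∈ A i r := by rw [hfg]; exact hφspec g
  -- mixed matrices
  have hmixmem : ∀ a : Fin n, ∀ r,
      (fun r => if r = a then mat g r else mat f r) r ∈ A i r := by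
    intro a r
    dsimp only
    split
    · exact hMg r
    · exact hMf r
  have hδfg : ((f j).card = θ) ↔ ((g j).card = θ) := by
    have h := congrFun (hmono i (mat f) hMf (mat g) hMg) j
    simp only [blockDelta, hw, decide_eq_decide] at h
    exact h
  have hδ : ∀ a : Fin n,
      (colWeight (fun r => if r = a then mat g r else mat f r) j = θ) ↔ ((f j).card = θ) := by
    intro a
    have h := congrFun (hmono i _ (hmixmem a) (mat f) hMf) j
    simp only [blockDelta, hw, decide_eq_decide] at h
    exact h
  -- weight of the mixed column
  have hwmix₁ : ∀ a : Fin n, a ∉ g j →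
      colWeight (fun r => if r = a then mat g r else mat f r) j = ((f j).erase a).card := by
    intro a ha
    unfold colWeight
    congr 1
    ext r
    by_cases hr : r = a
    · subst hr; simp [hmat, ha]
    · simp [hmat, hr]
  have hwmix₂ : ∀ a : Fin n, a ∈ g j → a ∉ f j →
      colWeight (fun r => if r = a then mat g r else mat f r) j = (insert a (f j)).card := by
    intro a ha ha'
    unfold colWeight
    congr 1
    ext r
    by_cases hr : r = a
    · subst hr; simp [hmat, ha]
    · simp [hmat, hr]
  have hfK : (f j).card = θ - 1 ∨ (f j).card = θ ∨ (f j).card = θ + 1 := by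
    have := Fintype.mem_piFinset.mp hf j
    simpa [hKdef] using this
  have hgK : (g j).card = θ - 1 ∨ (g j).card = θ ∨ (g j).card = θ + 1 := by
    have := Fintype.mem_piFinset.mp hg j
    simpa [hKdef] using this
  -- key case analysis
  rcases hfK with hS | hS | hS
  · -- |S| = θ - 1 : pick a ∈ T \ S
    have hSne : (f j).card ≠ θ := by omega
    have hTne : (g j).card ≠ θ := fun h => hSne (hδfg.mpr h)
    have hTS : ¬ g j ⊆ f j := by
      intro hsub
      rcases lt_or_eq_of_le (Finset.card_le_card hsub) with h | h
      · omega
      · exact hj (Finset.eq_of_subset_of_card_le hsub (le_of_eq h.symm)).symm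
    obtain ⟨a, haT, haS⟩ := Finset.not_subset.mp hTS
    have := (hδ a).symm
    rw [hwmix₂ a haT haS, Finset.card_insert_of_notMem haS] at this
    omega
  · -- |S| = θ
    by_cases hsub : f j ⊆ g j
    · obtain ⟨a, haT, haS⟩ := Finset.exists_of_ssubset (lt_of_le_of_ne hsub hj)
      have := (hδ a).symm
      rw [hwmix₂ a haT haS, Finset.card_insert_of_notMem haS] at this
      omega
    · obtain ⟨a, haS, haT⟩ := Finset.not_subset.mp hsub
      have := (hδ a).symm
      rw [hwmix₁ a haT, Finset.card_erase_of_mem haS] at this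
      omega
  · -- |S| = θ + 1 : pick a ∈ S \ T
    have hSne : (f j).card ≠ θ := by omega
    have hTne : (g j).card ≠ θ := fun h => hSne (hδfg.mpr h)
    have hST : ¬ f j ⊆ g j := by
      intro hsub
      have := Finset.card_le_card hsub
      have hTc : (g j).card = θ + 1 := by omega
      exact hj (Finset.eq_of_subset_of_card_le hsub (by omega))
    obtain ⟨a, haS, haT⟩ := Finset.not_subset.mp hST
    have := (hδ a).symm
    rw [hwmix₁ a haT, Finset.card_erase_of_mem haS] at this
    omega
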